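/- arXiv:1206.3817 — 4 statements merged into one kernel-verified Lean document; each statement's English description precedes it below -/
import Mathlib

section
/- Lipschitz continuity of the one-sided Skorokhod reflection map: for continuous ψ₁, ψ₂, r₁, r₂ on [0,T] with reflections φ_k(t) = ψ_k(t) - max(0, sup_{s≤t}(ψ_k(s) - r_k(s))), one has sup_{t≤T} |φ₁(t) - φ₂(t)| ≤ 2 sup_{t≤T} |ψ₁(t) - ψ₂(t)| + 2 sup_{t≤T} |r₁(t) - r₂(t)|. -/
open Set

/-- One-sided Skorokhod reflection of `ψ` below the moving barrier `r`. -/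
noncomputable def reflBelow (ψ r : ℝ → ℝ) (t : ℝ) : ℝ :=
  ψ t - max 0 (sSup ((fun s => ψ s - r s) '' Icc 0 t))

/-- Lipschitz continuity of the one-sided Skorokhod reflection map in both the
driving path and the barrier, with respect to the uniform norm on `[0,T]`. -/
theorem skorokhod_reflection_lipschitz (T : ℝ) (hT : 0 ≤ T)
    (ψ₁ ψ₂ r₁ r₂ : ℝ → ℝ)
    (hψ₁ : Continuous ψ₁) (hψ₂ : Continuous ψ₂)
    (hr₁ : Continuous r₁) (hr₂ : Continuous r₂) :
    ∀ t : ℝ, 0 ≤ t → t ≤ T →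
      |reflBelow ψ₁ r₁ t - reflBelow ψ₂ r₂ t| ≤
        2 * sSup ((fun s => |ψ₁ s - ψ₂ s|) '' Icc 0 T) +
        2 * sSup ((fun s => |r₁ s - r₂ s|) '' Icc 0 T) := by
  intro t ht htT
  set A := sSup ((fun s => |ψ₁ s - ψ₂ s|) '' Icc 0 T) with hA
  set B := sSup ((fun s => |r₁ s - r₂ s|) '' Icc 0 T) with hB
  have hbddA : BddAbove ((fun s => |ψ₁ s - ψ₂ s|) '' Icc 0 T) :=
    (isCompact_Icc.image_of_continuousOn ((hψ₁.sub hψ₂).abs.continuousOn)).bddAbove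
  have hbddB : BddAbove ((fun s => |r₁ s - r₂ s|) '' Icc 0 T) :=
    (isCompact_Icc.image_of_continuousOn ((hr₁.sub hr₂).abs.continuousOn)).bddAbove
  have hAle : ∀ s ∈ Icc (0:ℝ) T, |ψ₁ s - ψ₂ s| ≤ A := fun s hs =>
    le_csSup hbddA ⟨s, hs, rfl⟩
  have hBle : ∀ s ∈ Icc (0:ℝ) T, |r₁ s - r₂ s| ≤ B := fun s hs =>
    le_csSup hbddB ⟨s, hs, rfl⟩
  have hB0 : 0 ≤ B := le_trans (abs_nonneg _) (hBle 0 ⟨le_refl _, hT⟩)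
  set S₁ := sSup ((fun s => ψ₁ s - r₁ s) '' Icc 0 t) with hS₁
  set S₂ := sSup ((fun s => ψ₂ s - r₂ s) '' Icc 0 t) with hS₂
  have hsub : Icc (0:ℝ) t ⊆ Icc 0 T := Icc_subset_Icc le_rfl htT
  have hne : (Icc (0:ℝ) t).Nonempty := ⟨0, le_refl _, ht⟩
  have hbdd1 : BddAbove ((fun s => ψ₁ s - r₁ s) '' Icc 0 t) :=
    (isCompact_Icc.image_of_continuousOn ((hψ₁.sub hr₁).continuousOn)).bddAbove
  have hbdd2 : BddAbove ((fun s => ψ₂ s - r₂ s) '' Icc 0 t) :=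
    (isCompact_Icc.image_of_continuousOn ((hψ₂.sub hr₂).continuousOn)).bddAbove
  have key : ∀ (f₁ g₁ f₂ g₂ : ℝ → ℝ) (hA1 : ∀ s ∈ Icc (0:ℝ) T, |f₁ s - f₂ s| ≤ A)
      (hB1 : ∀ s ∈ Icc (0:ℝ) T, |g₁ s - g₂ s| ≤ B)
      (hb2 : BddAbove ((fun s => f₂ s - g₂ s) '' Icc 0 t)),
      sSup ((fun s => f₁ s - g₁ s) '' Icc 0 t) ≤
      sSup ((fun s => f₂ s - g₂ s) '' Icc 0 t) + (A + B) := by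
    intro f₁ g₁ f₂ g₂ hA1 hB1 hb2
    apply csSup_le (hne.image _)
    rintro x ⟨s, hs, rfl⟩
    have h1 : f₁ s - f₂ s ≤ A := (abs_le.mp (hA1 s (hsub hs))).2
    have h2 : g₂ s - g₁ s ≤ B := by
      have := (abs_le.mp (hB1 s (hsub hs))).1; linarith
    have h3 : f₂ s - g₂ s ≤ sSup ((fun s => f₂ s - g₂ s) '' Icc 0 t) :=
      le_csSup hb2 ⟨s, hs, rfl⟩
    show f₁ s - g₁ s ≤ _
    linarith
  have h12 : S₁ ≤ S₂ + (A + B) := key ψ₁ r₁ ψ₂ r₂ hAle hBle hbdd2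
  have h21 : S₂ ≤ S₁ + (A + B) := by
    refine key ψ₂ r₂ ψ₁ r₁ (fun s hs => ?_) (fun s hs => ?_) hbdd1
    · rw [abs_sub_comm]; exact hAle s hs
    · rw [abs_sub_comm]; exact hBle s hs
  have hSabs : |S₁ - S₂| ≤ A + B := abs_sub_le_iff.mpr ⟨by linarith, by linarith⟩
  have hMabs : |max 0 S₁ - max 0 S₂| ≤ A + B := by
    rw [max_comm 0 S₁, max_comm 0 S₂]
    exact le_trans (abs_max_sub_max_le_abs _ _ _) hSabs
  have hψt : |ψ₁ t - ψ₂ t| ≤ A := hAle t ⟨ht, htT⟩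
  have := abs_sub_abs_le_abs_sub (ψ₁ t - ψ₂ t) (max 0 S₁ - max 0 S₂)
  simp only [reflBelow, ← hS₁, ← hS₂]
  have habs : |(ψ₁ t - max 0 S₁) - (ψ₂ t - max 0 S₂)| ≤
      |ψ₁ t - ψ₂ t| + |max 0 S₁ - max 0 S₂| := by
    have : (ψ₁ t - max 0 S₁) - (ψ₂ t - max 0 S₂) =
        (ψ₁ t - ψ₂ t) - (max 0 S₁ - max 0 S₂) := by ring
    rw [this]; exact abs_sub _ _
  calc |(ψ₁ t - max 0 S₁) - (ψ₂ t - max 0 S₂)| ≤ A + (A + B) := by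
        refine habs.trans (add_le_add hψt hMabs)
    _ ≤ 2 * A + 2 * B := by linarith
end

section
/- If ψ : [0,∞) → ℝ is continuous, r : [0,∞) → ℝ is continuous, ψ(0) ≤ r(0), and φ is the one-sided reflection of ψ below r (φ(t) = ψ(t) - max(0, sup_{s≤t}(ψ(s)-r(s)))), then at any time t with φ(t) < r(t), φ agrees locally with a vertical translate of ψ: there exists ε > 0 such that φ(u) - φ(t) = ψ(u) - ψ(t) for all u ∈ [t, t+ε). -/
open Set

/-- Away from the contact set, the reflected path moves in parallel with the driving
path: if `φ(t) < r(t)` then for a short time after `t` the increments of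
`φ := reflBelow ψ r` coincide with those of `ψ`. -/
theorem reflection_locally_translate (ψ r : ℝ → ℝ)
    (hψ : Continuous ψ) (hr : Continuous r) (h0 : ψ 0 ≤ r 0)
    (t : ℝ) (ht : 0 ≤ t) (hlt : reflBelow ψ r t < r t) :
    ∃ ε : ℝ, 0 < ε ∧ ∀ u : ℝ, t ≤ u → u < t + ε →
      reflBelow ψ r u - reflBelow ψ r t = ψ u - ψ t := by
  set f : ℝ → ℝ := fun s => ψ s - r s with hf
  have hfc : Continuous f := hψ.sub hr
  set M : ℝ := max 0 (sSup (f '' Icc 0 t)) with hM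
  have hftM : f t < M := by
    have : ψ t - M < r t := hlt
    simp only [hf]; linarith
  -- find ε by openness of {u | f u < M}
  have hopen : IsOpen {u : ℝ | f u < M} := isOpen_lt hfc continuous_const
  obtain ⟨ε, hε, hball⟩ := Metric.isOpen_iff.mp hopen t hftM
  refine ⟨ε, hε, fun u htu hu => ?_⟩
  have htu' : (0:ℝ) ≤ u := le_trans ht htu
  have hbdd : ∀ v : ℝ, 0 ≤ v → BddAbove (f '' Icc 0 v) :=
    fun v hv => ((isCompact_Icc.image hfc)).bddAbove
  have hne : (f '' Icc 0 t).Nonempty := ⟨f t, mem_image_of_mem f ⟨ht, le_refl t⟩⟩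
  have hneu : (f '' Icc 0 u).Nonempty := ⟨f u, mem_image_of_mem f ⟨htu', le_refl u⟩⟩
  -- upper bound : sSup over Icc 0 u ≤ M
  have hub : sSup (f '' Icc 0 u) ≤ M := by
    apply csSup_le hneu
    rintro x ⟨s, ⟨hs0, hsu⟩, rfl⟩
    by_cases hst : s ≤ t
    · calc f s ≤ sSup (f '' Icc 0 t) := le_csSup (hbdd t ht) (mem_image_of_mem f ⟨hs0, hst⟩)
        _ ≤ M := le_max_right _ _
    · push_neg at hst
      have : s ∈ Metric.ball t ε := by
        simp only [Metric.mem_ball, Real.dist_eq, abs_lt]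
        constructor <;> linarith
      exact le_of_lt (hball this)
  -- lower bound : M ≤ max 0 (sSup (f '' Icc 0 u))
  have hmono : sSup (f '' Icc 0 t) ≤ sSup (f '' Icc 0 u) :=
    csSup_le_csSup (hbdd u htu') hne (image_mono (Icc_subset_Icc le_rfl htu))
  have hEq : max 0 (sSup (f '' Icc 0 u)) = M := by
    refine le_antisymm (max_le (le_max_left _ _) hub) (max_le (le_max_left _ _) ?_)
    exact le_trans hmono (le_max_right _ _)
  show ψ u - max 0 (sSup (f '' Icc 0 u)) - (ψ t - M) = ψ u - ψ t
  rw [hEq]; ring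
end

section
/- If continuous paths ψ_n → ψ and r_n → r uniformly on every compact subset of [0,∞), with ψ_n(0) ≤ r_n(0) for all n and ψ(0) ≤ r(0), then the one-sided Skorokhod reflections φ_n of ψ_n below r_n converge uniformly on compacts to the reflection φ of ψ below r. -/
open Set Filter

lemma sSup_image_le_sSup_image_add {f g : ℝ → ℝ} (hf : Continuous f) (hg : Continuous g)
    {t ε : ℝ} (ht : 0 ≤ t) (h : ∀ s ∈ Icc (0:ℝ) t, f s ≤ g s + ε) :
    sSup (f '' Icc 0 t) ≤ sSup (g '' Icc 0 t) + ε := by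
  have hne : (Icc (0:ℝ) t).Nonempty := ⟨0, le_refl 0, ht⟩
  have hbdd : BddAbove (g '' Icc 0 t) := (isCompact_Icc.image hg).bddAbove
  refine csSup_le (hne.image f) ?_
  rintro x ⟨s, hs, rfl⟩
  exact le_trans (h s hs) (add_le_add (le_csSup hbdd ⟨s, hs, rfl⟩) le_rfl)

/-- Continuity of the one-sided Skorokhod reflection map: if `ψₙ → ψ` and `rₙ → r`
uniformly on every compact subset of `[0,∞)`, then the reflections of `ψₙ` below
`rₙ` converge uniformly on compacts to the reflection of `ψ` below `r`. -/
theorem reflection_continuous_in_data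
    (ψ r : ℝ → ℝ) (ψn rn : ℕ → ℝ → ℝ)
    (hψ : Continuous ψ) (hr : Continuous r)
    (hψn : ∀ n, Continuous (ψn n)) (hrn : ∀ n, Continuous (rn n))
    (h0n : ∀ n, ψn n 0 ≤ rn n 0) (h0 : ψ 0 ≤ r 0)
    (hψconv : ∀ T : ℝ, 0 ≤ T →
      TendstoUniformlyOn (fun n t => ψn n t) ψ atTop (Icc 0 T))
    (hrconv : ∀ T : ℝ, 0 ≤ T →
      TendstoUniformlyOn (fun n t => rn n t) r atTop (Icc 0 T)) :
    ∀ T : ℝ, 0 ≤ T →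
      TendstoUniformlyOn (fun n t => reflBelow (ψn n) (rn n) t)
        (fun t => reflBelow ψ r t) atTop (Icc 0 T) := by
  intro T hT
  rw [Metric.tendstoUniformlyOn_iff]
  intro ε hε
  have hε3 : 0 < ε / 3 := by linarith
  have h1 := (Metric.tendstoUniformlyOn_iff.mp (hψconv T hT)) (ε / 3) hε3
  have h2 := (Metric.tendstoUniformlyOn_iff.mp (hrconv T hT)) (ε / 3) hε3
  filter_upwards [h1, h2] with n hn1 hn2
  intro t ht
  have ht0 : (0:ℝ) ≤ t := ht.1
  set A := sSup ((fun s => ψ s - r s) '' Icc 0 t) with hA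
  set An := sSup ((fun s => ψn n s - rn n s) '' Icc 0 t) with hAn
  have hle : ∀ s ∈ Icc (0:ℝ) t, |ψ s - ψn n s| ≤ ε / 3 ∧ |r s - rn n s| ≤ ε / 3 := by
    intro s hs
    have hsT : s ∈ Icc (0:ℝ) T := ⟨hs.1, hs.2.trans ht.2⟩
    constructor
    · exact le_of_lt (by simpa [Real.dist_eq] using hn1 s hsT)
    · exact le_of_lt (by simpa [Real.dist_eq] using hn2 s hsT)
  have hAle : A ≤ An + (ε / 3 + ε / 3) := by
    refine sSup_image_le_sSup_image_add (hψ.sub hr) ((hψn n).sub (hrn n)) ht0 ?_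
    intro s hs
    have := hle s hs
    have h1 := abs_le.mp this.1
    have h2 := abs_le.mp this.2
    simp only [Pi.sub_apply]
    linarith [h1.1, h1.2, h2.1, h2.2]
  have hAnle : An ≤ A + (ε / 3 + ε / 3) := by
    refine sSup_image_le_sSup_image_add ((hψn n).sub (hrn n)) (hψ.sub hr) ht0 ?_
    intro s hs
    have := hle s hs
    have h1 := abs_le.mp this.1
    have h2 := abs_le.mp this.2
    simp only [Pi.sub_apply]
    linarith [h1.1, h1.2, h2.1, h2.2]
  have hAabs : |A - An| ≤ ε / 3 + ε / 3 := abs_le.mpr ⟨by linarith, by linarith⟩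
  have hmax : |max 0 A - max 0 An| ≤ ε / 3 + ε / 3 := by
    rw [max_comm 0 A, max_comm 0 An]
    exact le_trans (abs_max_sub_max_le_abs A An 0) hAabs
  have hψt : |ψ t - ψn n t| < ε / 3 := by
    simpa [Real.dist_eq] using hn1 t ht
  rw [Real.dist_eq]
  simp only [reflBelow, ← hA, ← hAn]
  calc |ψ t - max 0 A - (ψn n t - max 0 An)|
      = |(ψ t - ψn n t) - (max 0 A - max 0 An)| := by ring_nf
    _ ≤ |ψ t - ψn n t| + |max 0 A - max 0 An| := abs_sub _ _
    _ < ε := by linarith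
end

section
/- Two-sided bound for reflection in a time-dependent interval: Let l ≤ r be continuous real-valued functions on [0,∞) and ψ continuous with ψ(0) ∈ [l(0), r(0)]. If (φ, η) solves the extended Skorokhod problem for ψ in [l(t), r(t)], then for all t, max over s ≤ t of (l(s) - ψ(s)) ≥ η(t) ≥ -max over s ≤ t of (ψ(s) - r(s)) (truncated at 0), i.e. |η(t)| ≤ max(0, sup_{s≤t}(l(s)-ψ(s)), sup_{s≤t}(ψ(s)-r(s))). -/
open Set

/-- `(φ, η)` solves the extended Skorokhod problem for the continuous input `ψ` in
the time-dependent interval `[l(t), r(t)]`: `φ = ψ + η ∈ [l, r]` on `[0,∞)`,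
`η(0) = 0`, `η` is nondecreasing on intervals where `φ < r` throughout and
nonincreasing on intervals where `φ > l` throughout. -/
def SolvesESP (l r ψ φ η : ℝ → ℝ) : Prop :=
  Continuous φ ∧ Continuous η ∧ η 0 = 0 ∧
  (∀ t : ℝ, 0 ≤ t → φ t = ψ t + η t ∧ l t ≤ φ t ∧ φ t ≤ r t) ∧
  (∀ s t : ℝ, 0 ≤ s → s ≤ t →
    (∀ u : ℝ, s < u → u ≤ t → φ u < r u) → η s ≤ η t) ∧
  (∀ s t : ℝ, 0 ≤ s → s ≤ t →
    (∀ u : ℝ, s < u → u ≤ t → l u < φ u) → η t ≤ η s)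

/-- Two-sided bound for the correction term of the reflection in a time-dependent
interval: `-max(0, sup_{s≤t}(ψ(s) - r(s))) ≤ η(t) ≤ max(0, sup_{s≤t}(l(s) - ψ(s)))`,
hence `|η(t)| ≤ max(0, sup_{s≤t}(l(s)-ψ(s)), sup_{s≤t}(ψ(s)-r(s)))`. -/
theorem esp_correction_bound (l r ψ φ η : ℝ → ℝ)
    (hl : Continuous l) (hr : Continuous r) (hψ : Continuous ψ)
    (hlr : ∀ t : ℝ, 0 ≤ t → l t ≤ r t)
    (h0 : l 0 ≤ ψ 0 ∧ ψ 0 ≤ r 0)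
    (hsol : SolvesESP l r ψ φ η) :
    ∀ t : ℝ, 0 ≤ t →
      (-(max 0 (sSup ((fun s => ψ s - r s) '' Icc 0 t))) ≤ η t ∧
        η t ≤ max 0 (sSup ((fun s => l s - ψ s) '' Icc 0 t))) ∧
      |η t| ≤ max 0 (max (sSup ((fun s => l s - ψ s) '' Icc 0 t))
        (sSup ((fun s => ψ s - r s) '' Icc 0 t))) := by
  obtain ⟨hφc, hηc, hη0, hsys, hup, hdown⟩ := hsol
  intro t ht
  set A := max 0 (sSup ((fun s => l s - ψ s) '' Icc 0 t)) with hAdef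
  set B := max 0 (sSup ((fun s => ψ s - r s) '' Icc 0 t)) with hBdef
  have hA0 : (0:ℝ) ≤ A := le_max_left _ _
  have hB0 : (0:ℝ) ≤ B := le_max_left _ _
  have hAmem : ∀ u ∈ Icc (0:ℝ) t, l u - ψ u ≤ A := by
    intro u hu
    have hbd : BddAbove ((fun s => l s - ψ s) '' Icc 0 t) :=
      (isCompact_Icc.image (by fun_prop)).bddAbove
    exact le_trans (le_csSup hbd ⟨u, hu, rfl⟩) (le_max_right _ _)
  have hBmem : ∀ u ∈ Icc (0:ℝ) t, ψ u - r u ≤ B := by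
    intro u hu
    have hbd : BddAbove ((fun s => ψ s - r s) '' Icc 0 t) :=
      (isCompact_Icc.image (by fun_prop)).bddAbove
    exact le_trans (le_csSup hbd ⟨u, hu, rfl⟩) (le_max_right _ _)
  -- upper bound
  have hub : η t ≤ A := by
    by_contra h
    push_neg at h
    set S := Icc (0:ℝ) t ∩ η ⁻¹' Iic A with hSdef
    have hScl : IsClosed S := isClosed_Icc.inter (isClosed_Iic.preimage hηc)
    have hScomp : IsCompact S :=
      isCompact_Icc.of_isClosed_subset hScl (fun x hx => hx.1)
    have hSne : S.Nonempty := ⟨0, ⟨le_refl 0, ht⟩, by simpa [hη0] using hA0⟩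
    obtain ⟨⟨hs0, hst⟩, hsA⟩ := hScomp.sSup_mem hSne
    set s := sSup S
    have key : ∀ u : ℝ, s < u → u ≤ t → l u < φ u := by
      intro u hsu hut
      have hu0 : (0:ℝ) ≤ u := le_of_lt (lt_of_le_of_lt hs0 hsu)
      have huS : u ∉ S := by
        intro huS
        exact absurd (le_csSup hScomp.bddAbove huS) (not_le.mpr hsu)
      have hAu : A < η u := by
        by_contra h'
        exact huS ⟨⟨hu0, hut⟩, not_lt.mp h'⟩
      have := (hsys u hu0).1
      have hlu := hAmem u ⟨hu0, hut⟩
      linarith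
    have := hdown s t hs0 hst key
    have hsA' : η s ≤ A := hsA
    linarith
  -- lower bound
  have hlb : -B ≤ η t := by
    by_contra h
    push_neg at h
    set S := Icc (0:ℝ) t ∩ η ⁻¹' Ici (-B) with hSdef
    have hScl : IsClosed S := isClosed_Icc.inter (isClosed_Ici.preimage hηc)
    have hScomp : IsCompact S :=
      isCompact_Icc.of_isClosed_subset hScl (fun x hx => hx.1)
    have hSne : S.Nonempty := ⟨0, ⟨le_refl 0, ht⟩, by simp [hη0]; linarith⟩
    obtain ⟨⟨hs0, hst⟩, hsB⟩ := hScomp.sSup_mem hSne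
    set s := sSup S
    have key : ∀ u : ℝ, s < u → u ≤ t → φ u < r u := by
      intro u hsu hut
      have hu0 : (0:ℝ) ≤ u := le_of_lt (lt_of_le_of_lt hs0 hsu)
      have huS : u ∉ S := by
        intro huS
        exact absurd (le_csSup hScomp.bddAbove huS) (not_le.mpr hsu)
      have hBu : η u < -B := by
        by_contra h'
        exact huS ⟨⟨hu0, hut⟩, not_lt.mp h'⟩
      have := (hsys u hu0).1
      have hru := hBmem u ⟨hu0, hut⟩
      linarith
    have := hup s t hs0 hst key
    have hsB' : -B ≤ η s := hsB
    linarith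
  refine ⟨⟨hlb, hub⟩, ?_⟩
  rw [abs_le]
  constructor
  · have : B ≤ max 0 (max (sSup ((fun s => l s - ψ s) '' Icc 0 t))
        (sSup ((fun s => ψ s - r s) '' Icc 0 t))) :=
      max_le_max le_rfl (le_max_right _ _)
    linarith
  · have : A ≤ max 0 (max (sSup ((fun s => l s - ψ s) '' Icc 0 t))
        (sSup ((fun s => ψ s - r s) '' Icc 0 t))) :=
      max_le_max le_rfl (le_max_left _ _)
    linarith
end
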